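/- Let w ∈ S_n, let 1 ≤ i ≤ n and 1 ≤ x ≤ c_i(w). Then b_{i,x}(w) ∈ c(Λ_w); that is, there exists v ∈ S_n with v ≤_L w and c(v) = b_{i,x}(w). -/

import Mathlib

/-- The inversion set of `w`: pairs of positions `(i,j)` with `i < j` and `w i > w j`. -/
def Invs {n : ℕ} (w : Equiv.Perm (Fin n)) : Finset (Fin n × Fin n) :=
  Finset.univ.filter (fun p => p.1 < p.2 ∧ w p.2 < w p.1)

/-- The length (number of inversions) of `w`. -/
def len {n : ℕ} (w : Equiv.Perm (Fin n)) : ℕ := (Invs w).card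

/-- The `i`-th entry of the Lehmer code of `w`. -/
def lehmer {n : ℕ} (w : Equiv.Perm (Fin n)) (i : Fin n) : ℕ :=
  ((Invs w).filter (fun p => p.1 = i)).card

/-- The extended Lehmer code `m_{i,j}(w)`: the number of inversions `(i,k)` with `k < j`. -/
def mext {n : ℕ} (w : Equiv.Perm (Fin n)) (i : Fin n) (j : Fin (n + 1)) : ℕ :=
  ((Invs w).filter (fun p => p.1 = i ∧ (p.2 : ℕ) < (j : ℕ))).card

/-- The left weak order: `v ≤_L w` iff `inv(v) ⊆ inv(w)`. -/
def leftWeak {n : ℕ} (v w : Equiv.Perm (Fin n)) : Prop := Invs v ⊆ Invs w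

/-- The value of `w` extended to `Fin (n+1)` by fixing the last point
(the `1`-indexed convention `w(n+1) = n+1` becomes `wval w n = n` here). -/
def wval {n : ℕ} (w : Equiv.Perm (Fin n)) (j : Fin (n + 1)) : ℕ :=
  if h : (j : ℕ) < n then (w ⟨j, h⟩ : ℕ) else n

/-- The set of non-inversions of `w`: pairs `(i,j)` with `i ≤ j ≤ n+1` and `w i ≤ w j`,
where `w` is extended by fixing the last point. -/
def Ninvs {n : ℕ} (w : Equiv.Perm (Fin n)) : Finset (Fin n × Fin (n + 1)) :=
  Finset.univ.filter (fun p => (p.1 : ℕ) ≤ (p.2 : ℕ) ∧ (w p.1 : ℕ) ≤ wval w p.2)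

/-- The set of Lehmer codes of elements of the weak order interval `Λ_w = [id, w]`. -/
def codeSet {n : ℕ} (w : Equiv.Perm (Fin n)) : Set (Fin n → ℕ) :=
  {x | ∃ v : Equiv.Perm (Fin n), leftWeak v w ∧ lehmer v = x}

/-- The tuple `b_{i,x}(w)`: the `j`-th coordinate is `0` if `j < i` or `(i,j) ∈ inv(w)`,
and is `max {0, x - m_{i,j}(w)}` (truncated subtraction) if `j ≥ i` and `(i,j) ∈ ninv(w)`. -/
def bmin {n : ℕ} (w : Equiv.Perm (Fin n)) (i : Fin n) (x : ℕ) : Fin n → ℕ :=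
  fun j => if (i : ℕ) ≤ (j : ℕ) ∧ (w i : ℕ) ≤ (w j : ℕ) then x - mext w i j.castSucc else 0

/-- The set `M_w` of all `b_{i,x}(w)` for `1 ≤ x ≤ c_i(w)`. -/
def Mset {n : ℕ} (w : Equiv.Perm (Fin n)) : Set (Fin n → ℕ) :=
  {z | ∃ (i : Fin n) (x : ℕ), 1 ≤ x ∧ x ≤ lehmer w i ∧ z = bmin w i x}

/-- The direct sum `v × w ∈ S_{m+n}` of permutations. -/
def dsum {m n : ℕ} (v : Equiv.Perm (Fin m)) (w : Equiv.Perm (Fin n)) :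
    Equiv.Perm (Fin (m + n)) :=
  finSumFinEquiv.permCongr (Equiv.sumCongr v w)

namespace BminAux

open Finset

variable {n : ℕ}

/-- The rank of `k` in the finset `A`: the number of elements of `A` below `k`. -/
def rk (A : Finset (Fin n)) (k : Fin n) : ℕ := (A.filter (fun y => y < k)).card

lemma rk_le_rk (A : Finset (Fin n)) {k j : Fin n} (hkj : k ≤ j) : rk A k ≤ rk A j := by
  apply card_le_card
  apply monotone_filter_right
  intro y _ hy
  exact lt_of_lt_of_le hy hkj

lemma rk_lt_rk {A : Finset (Fin n)} {k j : Fin n} (hk : k ∈ A) (hkj : k < j) :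
    rk A k < rk A j := by
  apply card_lt_card
  constructor
  · apply monotone_filter_right
    intro y _ hy
    exact lt_trans hy hkj
  · intro hsub
    have : k ∈ A.filter (fun y => y < j) := mem_filter.2 ⟨hk, hkj⟩
    have := hsub this
    simp at this

lemma lt_iff_rk_lt {A : Finset (Fin n)} {k : Fin n} (hk : k ∈ A) (j : Fin n) :
    k < j ↔ rk A k < rk A j := by
  constructor
  · exact rk_lt_rk hk
  · intro h
    by_contra hc
    exact absurd (rk_le_rk A (not_lt.1 hc)) (not_le.2 h)

lemma rk_injOn {A : Finset (Fin n)} {k j : Fin n} (hk : k ∈ A) (hj : j ∈ A)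
    (h : rk A k = rk A j) : k = j := by
  rcases lt_trichotomy k j with hlt | heq | hgt
  · exact absurd (rk_lt_rk hk hlt) (by omega)
  · exact heq
  · exact absurd (rk_lt_rk hj hgt) (by omega)

lemma rk_lt_card {A : Finset (Fin n)} {k : Fin n} (hk : k ∈ A) : rk A k < A.card := by
  apply card_lt_card
  constructor
  · exact filter_subset _ _
  · intro hsub
    have := hsub hk
    simp at this

lemma rk_surj (A : Finset (Fin n)) {r : ℕ} (hr : r < A.card) : ∃ k ∈ A, rk A k = r := by
  have := surj_on_of_inj_on_of_card_le (s := A) (t := Finset.range A.card)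
    (fun a _ => rk A a) (fun a ha => mem_range.2 (rk_lt_card ha))
    (fun a₁ a₂ ha₁ ha₂ h => rk_injOn ha₁ ha₂ h) (by simp)
  obtain ⟨k, hk, hk2⟩ := this r (mem_range.2 hr)
  exact ⟨k, hk, hk2.symm⟩

lemma card_filter_rk_lt (A : Finset (Fin n)) {y : ℕ} (hy : y ≤ A.card) :
    (A.filter fun k => rk A k < y).card = y := by
  have : (Finset.range y).card = y := Finset.card_range y
  rw [← this]
  apply card_bij (fun k _ => rk A k)
  · intro a ha
    rw [this] at ha
    exact mem_range.2 (mem_filter.1 ha).2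
  · intro a₁ ha₁ a₂ ha₂ h
    exact rk_injOn (mem_filter.1 ha₁).1 (mem_filter.1 ha₂).1 h
  · intro r hr
    obtain ⟨k, hk, hk2⟩ := rk_surj A (lt_of_lt_of_le (mem_range.1 hr) hy)
    exact ⟨k, mem_filter.2 ⟨hk, by rw [hk2, this]; exact mem_range.1 hr⟩, hk2⟩

/-- Positions `k > i` with `w k < w i` (the inversion partners of `i`). -/
def Sset (w : Equiv.Perm (Fin n)) (i : Fin n) : Finset (Fin n) :=
  Finset.univ.filter (fun k => i < k ∧ w k < w i)

/-- The `x` smallest elements of `Sset w i`. -/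
def Tset (w : Equiv.Perm (Fin n)) (i : Fin n) (x : ℕ) : Finset (Fin n) :=
  (Sset w i).filter (fun k => rk (Sset w i) k < x)

variable (w : Equiv.Perm (Fin n)) (i : Fin n) (x : ℕ)

/-- Number of elements of `T` strictly below `j`. -/
def fT (j : Fin n) : ℕ := ((Tset w i x).filter (fun k => k < j)).card

/-- Number of elements of `T` strictly above `j`. -/
def gT (j : Fin n) : ℕ := ((Tset w i x).filter (fun k => j < k)).card

variable {w i x}

lemma mem_Tset {k : Fin n} (hk : k ∈ Tset w i x) :
    i < k ∧ w k < w i ∧ rk (Sset w i) k < x := by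
  have h1 := mem_filter.1 hk
  have h2 := mem_filter.1 h1.1
  simp only [Sset, mem_filter, mem_univ, true_and] at h2
  exact ⟨h2.1, h2.2, h1.2⟩

lemma Tset_card (h : x ≤ (Sset w i).card) : (Tset w i x).card = x :=
  card_filter_rk_lt _ h

lemma fT_eq (h : x ≤ (Sset w i).card) (j : Fin n) :
    fT w i x j = min x (rk (Sset w i) j) := by
  have h1 : (Tset w i x).filter (fun k => k < j)
      = (Sset w i).filter (fun k => rk (Sset w i) k < min x (rk (Sset w i) j)) := by
    rw [Tset, filter_filter]
    apply filter_congr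
    intro k hk
    simp only [lt_min_iff]
    constructor
    · rintro ⟨h2, h3⟩
      exact ⟨h2, (lt_iff_rk_lt hk j).1 h3⟩
    · rintro ⟨h2, h3⟩
      exact ⟨h2, (lt_iff_rk_lt hk j).2 h3⟩
  rw [fT, h1]
  exact card_filter_rk_lt _ (le_trans (min_le_left _ _) h)

lemma fT_add_gT (h : x ≤ (Sset w i).card) (j : Fin n) :
    fT w i x j + gT w i x j + (if j ∈ Tset w i x then 1 else 0) = x := by
  classical
  have h0 := card_filter_add_card_filter_not (s := Tset w i x)
    (p := fun k => k < j)
  have h1 := card_filter_add_card_filter_not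
    (s := (Tset w i x).filter (fun k => ¬ k < j)) (p := fun k => j < k)
  rw [filter_filter, filter_filter] at h1
  have e1 : (Tset w i x).filter (fun k => ¬ k < j ∧ j < k)
      = (Tset w i x).filter (fun k => j < k) := by
    apply filter_congr; intro k _
    constructor
    · rintro ⟨_, h2⟩; exact h2
    · intro h2; exact ⟨not_lt.2 (le_of_lt h2), h2⟩
  have e2 : (Tset w i x).filter (fun k => ¬ k < j ∧ ¬ j < k)
      = (Tset w i x).filter (fun k => k = j) := by
    apply filter_congr; intro k _
    constructor
    · rintro ⟨h2, h3⟩; exact le_antisymm (not_lt.1 h3) (not_lt.1 h2)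
    · rintro rfl; exact ⟨lt_irrefl _, lt_irrefl _⟩
  rw [e1, e2, filter_eq'] at h1
  have h2 : (if j ∈ Tset w i x then ({j} : Finset (Fin n)) else ∅).card
      = (if j ∈ Tset w i x then 1 else 0) := by
    split <;> simp
  rw [h2] at h1
  rw [Tset_card h] at h0
  rw [fT, gT]
  omega

/-- Cardinality of a finset of `Fin n` inside an open interval. -/
lemma card_interval_le (B : Finset (Fin n)) (a b : Fin n) :
    (B.filter (fun k => a < k ∧ k < b)).card ≤ (b : ℕ) - a - 1 := by
  have : (B.filter (fun k => a < k ∧ k < b)).card ≤ (Finset.Ioo (a : ℕ) (b : ℕ)).card := by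
    refine card_le_card_of_injOn (fun k => (k : ℕ)) ?_ ?_
    · intro k hk
      have := (mem_filter.1 hk).2
      simp only [Finset.coe_Ioo, Set.mem_Ioo]
      exact ⟨this.1, this.2⟩
    · intro k _ j _ h
      exact Fin.val_injective h
  rwa [Nat.card_Ioo] at this

lemma gT_le (j : Fin n) : (j : ℕ) + gT w i x j < n := by
  have : gT w i x j ≤ (Finset.Ioo (j : ℕ) n).card := by
    rw [gT]
    refine card_le_card_of_injOn (fun k => (k : ℕ)) ?_ ?_
    · intro k hk
      have := (mem_filter.1 hk).2
      simp only [Finset.coe_Ioo, Set.mem_Ioo]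
      exact ⟨this, k.2⟩
    · intro k _ l _ h
      exact Fin.val_injective h
  rw [Nat.card_Ioo] at this
  have := j.2
  omega

lemma fT_le {j : Fin n} (hij : i < j) : (i : ℕ) + fT w i x j + 1 ≤ (j : ℕ) := by
  have e : (Tset w i x).filter (fun k => k < j)
      = (Tset w i x).filter (fun k => i < k ∧ k < j) := by
    apply filter_congr; intro k hk
    simp only [iff_and_self, and_iff_right_iff_imp]
    intro _; exact (mem_Tset hk).1
  have h1 : fT w i x j ≤ (j : ℕ) - i - 1 := by
    rw [fT, e]; exact card_interval_le _ _ _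
  have : (i : ℕ) < j := hij
  omega

lemma fT_le' {j : Fin n} (hij : i ≤ j) : (i : ℕ) + fT w i x j ≤ (j : ℕ) := by
  rcases eq_or_lt_of_le hij with heq | h
  · have h0 : fT w i x j = 0 := by
      rw [fT, card_eq_zero, filter_eq_empty_iff]
      intro k hk h2
      have h2' : k < i := by rw [heq]; exact h2
      exact absurd (lt_trans (mem_Tset hk).1 h2') (lt_irrefl _)
    have : (i : ℕ) = (j : ℕ) := by rw [heq]
    omega
  · have := fT_le (w := w) (x := x) h
    omega

/-- Decomposition of `gT` across a point `b > a`. -/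
lemma gT_split {a b : Fin n} (hab : a < b) :
    gT w i x a = ((Tset w i x).filter (fun k => a < k ∧ k < b)).card + gT w i x b
      + (if b ∈ Tset w i x then 1 else 0) := by
  classical
  have h1 := card_filter_add_card_filter_not
    (s := (Tset w i x).filter (fun k => a < k)) (p := fun k => k < b)
  rw [filter_filter, filter_filter] at h1
  have h2 := card_filter_add_card_filter_not
    (s := (Tset w i x).filter (fun k => a < k ∧ ¬ k < b)) (p := fun k => b < k)
  rw [filter_filter, filter_filter] at h2
  have e1 : (Tset w i x).filter (fun k => (a < k ∧ ¬ k < b) ∧ b < k)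
      = (Tset w i x).filter (fun k => b < k) := by
    apply filter_congr; intro k _
    constructor
    · rintro ⟨_, h⟩; exact h
    · intro h; exact ⟨⟨lt_trans hab h, not_lt.2 (le_of_lt h)⟩, h⟩
  have e2 : (Tset w i x).filter (fun k => (a < k ∧ ¬ k < b) ∧ ¬ b < k)
      = (Tset w i x).filter (fun k => k = b) := by
    apply filter_congr; intro k _
    constructor
    · rintro ⟨⟨_, h3⟩, h4⟩; exact le_antisymm (not_lt.1 h4) (not_lt.1 h3)
    · rintro rfl; exact ⟨⟨hab, lt_irrefl _⟩, lt_irrefl _⟩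
  rw [e1, e2, filter_eq'] at h2
  have h3 : (if b ∈ Tset w i x then ({b} : Finset (Fin n)) else ∅).card
      = (if b ∈ Tset w i x then 1 else 0) := by
    split <;> simp
  rw [h3] at h2
  rw [gT, gT]
  omega

lemma mem_Tset_iff {k : Fin n} :
    k ∈ Tset w i x ↔ (i < k ∧ w k < w i ∧ rk (Sset w i) k < x) := by
  unfold Tset; rw [mem_filter]; simp only [Sset, mem_filter, mem_univ, true_and, and_assoc]

lemma fT_lt_fT {a b : Fin n} (ha : a ∈ Tset w i x) (hab : a < b) :
    fT w i x a < fT w i x b := by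
  rw [fT, fT]
  apply card_lt_card
  constructor
  · apply monotone_filter_right
    intro y _ hy
    exact lt_trans hy hab
  · intro hsub
    have : a ∈ (Tset w i x).filter (fun k => k < b) := mem_filter.2 ⟨ha, hab⟩
    have := hsub this
    simp at this

variable (w i x)

/-- The underlying function of the witness permutation. -/
def vfun (j : Fin n) : ℕ :=
  if j ∈ Tset w i x then (i : ℕ) + fT w i x j
  else if (i : ℕ) ≤ (j : ℕ) then (j : ℕ) + gT w i x j
  else (j : ℕ)

variable {w i x}

lemma vfun_lt (j : Fin n) : vfun w i x j < n := by
  rw [vfun]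
  split
  · next hj =>
    have h1 := fT_le (w := w) (x := x) (mem_Tset hj).1
    have := j.2
    omega
  · split
    · exact gT_le j
    · exact j.2

lemma vfun_gt (h : x ≤ (Sset w i).card) {a b : Fin n} (hab : a < b)
    (hia : (i : ℕ) ≤ (a : ℕ)) (haT : a ∉ Tset w i x) (hbT : b ∈ Tset w i x) :
    vfun w i x b < vfun w i x a := by
  rw [vfun, vfun, if_pos hbT, if_neg haT, if_pos hia]
  have h1 := fT_add_gT h a
  have h2 := fT_add_gT h b
  rw [if_neg haT] at h1
  rw [if_pos hbT] at h2
  have h3 : (i : ℕ) + fT w i x a ≤ (a : ℕ) := fT_le' (Fin.le_def.2 hia)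
  omega

lemma vfun_lt_vfun (h : x ≤ (Sset w i).card) {a b : Fin n} (hab : a < b)
    (hc : ¬ ((i : ℕ) ≤ (a : ℕ) ∧ a ∉ Tset w i x ∧ b ∈ Tset w i x)) :
    vfun w i x a < vfun w i x b := by
  have habn : (a : ℕ) < (b : ℕ) := hab
  by_cases ha : a ∈ Tset w i x
  · have hia : i < a := (mem_Tset ha).1
    have hian : (i : ℕ) < (a : ℕ) := hia
    rw [vfun, vfun, if_pos ha]
    by_cases hb : b ∈ Tset w i x
    · rw [if_pos hb]
      have := fT_lt_fT ha hab
      omega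
    · rw [if_neg hb, if_pos (by omega : (i : ℕ) ≤ (b : ℕ))]
      have h1 := fT_add_gT h a
      have h2 := fT_add_gT h b
      rw [if_pos ha] at h1
      rw [if_neg hb] at h2
      have h3 : (i : ℕ) + fT w i x b + 1 ≤ (b : ℕ) := fT_le (lt_trans hia hab)
      omega
  · by_cases hia : (i : ℕ) ≤ (a : ℕ)
    · -- then b ∉ T by hc
      have hb : b ∉ Tset w i x := fun hb => hc ⟨hia, ha, hb⟩
      rw [vfun, vfun, if_neg ha, if_neg hb, if_pos hia,
        if_pos (by omega : (i : ℕ) ≤ (b : ℕ))]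
      have h1 := gT_split (w := w) (i := i) (x := x) hab
      rw [if_neg hb] at h1
      have h2 := card_interval_le (Tset w i x) a b
      omega
    · -- a < i
      rw [vfun, vfun, if_neg ha, if_neg hia]
      by_cases hb : b ∈ Tset w i x
      · rw [if_pos hb]
        omega
      · rw [if_neg hb]
        split <;> omega

lemma vfun_injective (h : x ≤ (Sset w i).card) :
    Function.Injective (fun j : Fin n => vfun w i x j) := by
  intro a b heq
  simp only at heq
  by_contra hne
  rcases lt_trichotomy a b with h1 | h1 | h1
  · by_cases hc : (i : ℕ) ≤ (a : ℕ) ∧ a ∉ Tset w i x ∧ b ∈ Tset w i x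
    · exact absurd heq (ne_of_gt (vfun_gt h h1 hc.1 hc.2.1 hc.2.2))
    · exact absurd heq (ne_of_lt (vfun_lt_vfun h h1 hc))
  · exact hne h1
  · by_cases hc : (i : ℕ) ≤ (b : ℕ) ∧ b ∉ Tset w i x ∧ a ∈ Tset w i x
    · exact absurd heq.symm (ne_of_gt (vfun_gt h h1 hc.1 hc.2.1 hc.2.2))
    · exact absurd heq.symm (ne_of_lt (vfun_lt_vfun h h1 hc))

/-- Counting pairs with fixed first coordinate equals counting second coordinates. -/
lemma card_pairs (s : Finset (Fin n × Fin n)) (q : Fin n → Prop) [DecidablePred q]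
    (j : Fin n) :
    (s.filter (fun p => p.1 = j ∧ q p.2)).card
      = (Finset.univ.filter (fun b => (j, b) ∈ s ∧ q b)).card := by
  apply card_nbij' (i := fun p => p.2) (j := fun b => (j, b))
  · intro p hp
    rw [mem_coe, mem_filter] at hp ⊢
    refine ⟨mem_univ _, ?_, hp.2.2⟩
    have h1 : (j, p.2) = p := by rw [← hp.2.1]
    rw [h1]
    exact hp.1
  · intro b hb
    rw [mem_coe, mem_filter] at hb ⊢
    exact ⟨hb.2.1, rfl, hb.2.2⟩
  · intro p hp
    rw [mem_coe, mem_filter] at hp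
    show (j, p.2) = p
    rw [← hp.2.1]
  · intro b _
    rfl

lemma card_pairs' (s : Finset (Fin n × Fin n)) (j : Fin n) :
    (s.filter (fun p => p.1 = j)).card
      = (Finset.univ.filter (fun b => (j, b) ∈ s)).card := by
  apply card_nbij' (i := fun p => p.2) (j := fun b => (j, b))
  · intro p hp
    rw [mem_coe, mem_filter] at hp ⊢
    refine ⟨mem_univ _, ?_⟩
    have h1 : (j, p.2) = p := by rw [← hp.2]
    rw [h1]
    exact hp.1
  · intro b hb
    rw [mem_coe, mem_filter] at hb ⊢
    exact ⟨hb.2, rfl⟩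
  · intro p hp
    rw [mem_coe, mem_filter] at hp
    show (j, p.2) = p
    rw [← hp.2]
  · intro b _
    rfl

lemma lehmer_eq_Scard : lehmer w i = (Sset w i).card := by
  rw [lehmer, card_pairs']
  congr 1
  ext b
  simp only [Invs, Sset, mem_filter, mem_univ, true_and]

lemma mext_eq (j : Fin n) : mext w i j.castSucc = rk (Sset w i) j := by
  rw [mext, card_pairs (q := fun b => (b : ℕ) < ((j.castSucc : Fin (n+1)) : ℕ))]
  rw [rk]
  congr 1
  ext b
  simp only [Invs, mem_filter, mem_univ, true_and, Sset, Fin.coe_castSucc,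
    Fin.lt_def, and_assoc]

end BminAux

open Finset BminAux in
/-- Lemma 4.3: for `i ∈ [n]` and `1 ≤ x ≤ c_i(w)`, the tuple `b_{i,x}(w)` lies in
`c(Λ_w)`; i.e. there is `v ≤_L w` with `c(v) = b_{i,x}(w)`. -/
theorem bmin_mem_codeSet {n : ℕ} (w : Equiv.Perm (Fin n)) (i : Fin n) (x : ℕ)
    (hx1 : 1 ≤ x) (hx2 : x ≤ lehmer w i) :
    ∃ v : Equiv.Perm (Fin n), leftWeak v w ∧ lehmer v = bmin w i x := by
  classical
  have h : x ≤ (Sset w i).card := by rw [← lehmer_eq_Scard]; exact hx2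
  have hinj : Function.Injective
      (fun j : Fin n => (⟨vfun w i x j, vfun_lt j⟩ : Fin n)) := by
    intro a b hab
    apply vfun_injective h
    simpa [Fin.ext_iff] using hab
  have hbij := Finite.injective_iff_bijective.1 hinj
  let v : Equiv.Perm (Fin n) := Equiv.ofBijective _ hbij
  have hv : ∀ j : Fin n, (v j : ℕ) = vfun w i x j := fun j => rfl
  have hchar : ∀ a b : Fin n,
      ((a, b) ∈ Invs v ↔ (a < b ∧ (i : ℕ) ≤ (a : ℕ) ∧ a ∉ Tset w i x ∧ b ∈ Tset w i x)) := by
    intro a b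
    simp only [Invs, mem_filter, mem_univ, true_and]
    constructor
    · rintro ⟨h1, h2⟩
      refine ⟨h1, ?_⟩
      by_contra hc
      have h3 := vfun_lt_vfun h h1 hc
      have h2' : vfun w i x b < vfun w i x a := by
        rw [← hv a, ← hv b]; exact h2
      omega
    · rintro ⟨h1, h2, h3, h4⟩
      refine ⟨h1, ?_⟩
      have h5 := vfun_gt h h1 h2 h3 h4
      rw [Fin.lt_def, hv a, hv b]
      exact h5
  refine ⟨v, ?_, ?_⟩
  · -- leftWeak
    intro p hp
    have hp' : (p.1, p.2) ∈ Invs v := by rwa [Prod.mk.eta]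
    obtain ⟨h1, h2, h3, h4⟩ := (hchar p.1 p.2).1 hp'
    obtain ⟨h5, h6, _⟩ := mem_Tset h4
    simp only [Invs, mem_filter, mem_univ, true_and]
    refine ⟨h1, ?_⟩
    rcases eq_or_lt_of_le h2 with heq | hlt
    · have : i = p.1 := Fin.ext heq
      rw [← this]
      exact h6
    · have hwle : w i ≤ w p.1 := by
        by_contra hcc
        have hwlt : w p.1 < w i := not_le.1 hcc
        have hS : p.1 ∈ Sset w i := by
          simp only [Sset, mem_filter, mem_univ, true_and]
          exact ⟨Fin.lt_def.2 hlt, hwlt⟩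
        have hrk : rk (Sset w i) p.1 < rk (Sset w i) p.2 := rk_lt_rk hS h1
        have hrk2 : rk (Sset w i) p.2 < x := (mem_Tset h4).2.2
        exact h3 (mem_Tset_iff.2 ⟨Fin.lt_def.2 hlt, hwlt, by omega⟩)
      exact lt_of_lt_of_le h6 hwle
  · -- lehmer
    funext j
    have hl : lehmer v j
        = if ((i : ℕ) ≤ (j : ℕ) ∧ j ∉ Tset w i x) then gT w i x j else 0 := by
      rw [lehmer, card_pairs']
      by_cases hc : (i : ℕ) ≤ (j : ℕ) ∧ j ∉ Tset w i x
      · rw [if_pos hc, gT]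
        congr 1
        ext b
        simp only [mem_filter, mem_univ, true_and]
        rw [hchar j b]
        constructor
        · rintro ⟨h1, _, _, h4⟩; exact ⟨h4, h1⟩
        · rintro ⟨hb, hjb⟩; exact ⟨hjb, hc.1, hc.2, hb⟩
      · rw [if_neg hc, card_eq_zero, filter_eq_empty_iff]
        intro b _
        rw [hchar j b]
        tauto
    rw [hl]
    simp only [bmin]
    rw [mext_eq]
    by_cases hij : (i : ℕ) ≤ (j : ℕ)
    · by_cases hjT : j ∈ Tset w i x
      · obtain ⟨h1, h2, h3⟩ := mem_Tset hjT
        rw [if_neg (fun hc => hc.2 hjT),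
          if_neg (fun hc => absurd hc.2 (not_le.2 (Fin.lt_def.1 h2)))]
      · have hfg := fT_add_gT h j
        rw [if_neg hjT] at hfg
        have hfT := fT_eq h j
        by_cases hw : (w i : ℕ) ≤ (w j : ℕ)
        · rw [if_pos ⟨hij, hjT⟩, if_pos ⟨hij, hw⟩]
          rcases le_total x (rk (Sset w i) j) with h5 | h5
          · rw [min_eq_left h5] at hfT; omega
          · rw [min_eq_right h5] at hfT; omega
        · rw [if_pos ⟨hij, hjT⟩, if_neg (fun hc => hw hc.2)]
          have hji : i ≠ j := by
            intro e
            exact hw (by rw [e])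
          have hij' : i < j := by
            rw [Fin.lt_def]
            have : (i : ℕ) ≠ (j : ℕ) := fun e => hji (Fin.ext e)
            omega
          have hwlt : w j < w i := by
            rw [Fin.lt_def]
            omega
          have hnr : ¬ rk (Sset w i) j < x := fun hcc =>
            hjT (mem_Tset_iff.2 ⟨hij', hwlt, hcc⟩)
          rw [min_eq_left (by omega)] at hfT
          omega
    · rw [if_neg (fun hc => hij hc.1), if_neg (fun hc => hij hc.1)]
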